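/- In the ring H^∞ of bounded holomorphic functions on the right half-plane ℂ₊, the fractional ideal generated by 1/(e^{-s}-1) and 1/s + 1/(s²+π²) equals the principal fractional ideal generated by (s+1)²/((e^{-s}-1)(s²+π²)). -/

import Mathlib

/-- The open right half-plane. -/
def RHP : Set ℂ := {s : ℂ | 0 < s.re}

/-- `H^∞`: functions holomorphic and bounded on the open right half-plane. -/
def Hinf : Set (ℂ → ℂ) :=
  {f : ℂ → ℂ | DifferentiableOn ℂ f RHP ∧ ∃ M : ℝ, ∀ s ∈ RHP, ‖f s‖ ≤ M}

open Complex

noncomputable def Complex.abs : AbsoluteValue ℂ ℝ := NormedField.toAbsoluteValue ℂ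

lemma Complex.norm_eq_abs (z : ℂ) : ‖z‖ = Complex.abs z := rfl

lemma Complex.abs_apply (z : ℂ) : Complex.abs z = Real.sqrt (Complex.normSq z) :=
  Complex.norm_def z

lemma Complex.abs_exp (z : ℂ) : Complex.abs (Complex.exp z) = Real.exp z.re :=
  Complex.norm_exp z

lemma Complex.abs_re_le_abs (z : ℂ) : |z.re| ≤ Complex.abs z := Complex.abs_re_le_norm z

lemma Complex.abs_exp_sub_one_le {x : ℂ} (hx : Complex.abs x ≤ 1) :
    Complex.abs (Complex.exp x - 1) ≤ 2 * Complex.abs x := Complex.norm_exp_sub_one_le hx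

lemma Complex.abs_ofReal (r : ℝ) : Complex.abs (r : ℂ) = |r| := Complex.norm_real r

lemma Complex.abs_I : Complex.abs Complex.I = 1 := Complex.norm_I

lemma Complex.abs_two : Complex.abs (2 : ℂ) = 2 := Complex.norm_two

noncomputable section Stmt5Aux

local notation "Pi" => (Real.pi : ℂ)

/-- The linear polynomial in the Bézout identity. -/
def qA (s : ℂ) : ℂ := ((Pi ^ 2 - 3) * s + 3 * Pi ^ 2 - 1) / 2

/-- Numerator of the corona solution `A`. -/
def NA (s : ℂ) : ℂ := (s + 1) ^ 3 - qA s * (Complex.exp (-s) - 1)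

/-- The corona solution `A`. -/
def AA (s : ℂ) : ℂ := NA s / ((s + 1) * (s ^ 2 + Pi ^ 2))

/-- The corona solution `B`. -/
def BB (s : ℂ) : ℂ := qA s / (s + 1)

lemma Hinf_mul {f g : ℂ → ℂ} (hf : f ∈ Hinf) (hg : g ∈ Hinf) :
    (fun s => f s * g s) ∈ Hinf := by
  obtain ⟨hfd, Mf, hMf⟩ := hf
  obtain ⟨hgd, Mg, hMg⟩ := hg
  refine ⟨hfd.mul hgd, |Mf| * |Mg|, fun s hs => ?_⟩
  rw [norm_mul]
  exact mul_le_mul ((hMf s hs).trans (le_abs_self _)) ((hMg s hs).trans (le_abs_self _))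
    (norm_nonneg _) (abs_nonneg _)

lemma Hinf_add {f g : ℂ → ℂ} (hf : f ∈ Hinf) (hg : g ∈ Hinf) :
    (fun s => f s + g s) ∈ Hinf := by
  obtain ⟨hfd, Mf, hMf⟩ := hf
  obtain ⟨hgd, Mg, hMg⟩ := hg
  exact ⟨hfd.add hgd, Mf + Mg, fun s hs =>
    (norm_add_le _ _).trans (add_le_add (hMf s hs) (hMg s hs))⟩

lemma Hinf_sub {f g : ℂ → ℂ} (hf : f ∈ Hinf) (hg : g ∈ Hinf) :
    (fun s => f s - g s) ∈ Hinf := by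
  obtain ⟨hfd, Mf, hMf⟩ := hf
  obtain ⟨hgd, Mg, hMg⟩ := hg
  exact ⟨hfd.sub hgd, Mf + Mg, fun s hs => (norm_sub_le _ _).trans
    (add_le_add (hMf s hs) (hMg s hs))⟩

lemma pi_sq_le : Real.pi ^ 2 ≤ 10 := by nlinarith [Real.pi_lt_d2, Real.pi_gt_three]

lemma abs_sub_le'' (a b : ℂ) : Complex.abs (a - b) ≤ Complex.abs a + Complex.abs b := by
  calc Complex.abs (a - b) = Complex.abs (a + -b) := by rw [sub_eq_add_neg]
  _ ≤ Complex.abs a + Complex.abs (-b) := Complex.abs.add_le _ _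
  _ = Complex.abs a + Complex.abs b := by rw [Complex.abs.map_neg]

lemma ne_zero_of_re_pos {z : ℂ} (h : 0 < z.re) : z ≠ 0 := by
  intro hz; rw [hz] at h; simp at h

lemma ne_zero_of_re_pos' {z : ℂ} (h : 0 < z.re) : z ≠ 0 := _root_.ne_zero_of_re_pos h

section facts
variable {s : ℂ} (hs : s ∈ RHP)

include hs

lemma hs_re : 0 < s.re := hs

lemma s_ne : s ≠ 0 := _root_.ne_zero_of_re_pos hs

lemma s1_ne : s + 1 ≠ 0 := by
  apply _root_.ne_zero_of_re_pos; simp only [Complex.add_re, Complex.one_re]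
  have : 0 < s.re := hs; linarith

lemma sm_ne : s - Pi * I ≠ 0 := by
  apply _root_.ne_zero_of_re_pos
  have : (s - Pi * I).re = s.re := by simp
  rw [this]; exact hs

lemma sp_ne : s + Pi * I ≠ 0 := by
  apply _root_.ne_zero_of_re_pos
  have : (s + Pi * I).re = s.re := by simp
  rw [this]; exact hs

omit hs

lemma sq_factor (s : ℂ) : s ^ 2 + Pi ^ 2 = (s - Pi * I) * (s + Pi * I) := by
  have h : (s - Pi * I) * (s + Pi * I) = s ^ 2 - Pi ^ 2 * (I * I) := by ring
  rw [Complex.I_mul_I] at h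
  rw [h]; ring

include hs

lemma sq_ne : s ^ 2 + Pi ^ 2 ≠ 0 := by
  rw [sq_factor]; exact mul_ne_zero (sm_ne hs) (sp_ne hs)

lemma E_ne : Complex.exp (-s) - 1 ≠ 0 := by
  intro h
  have h1 : Complex.exp (-s) = 1 := by linear_combination h
  have h2 : Complex.abs (Complex.exp (-s)) = 1 := by rw [h1]; simp
  rw [Complex.abs_exp] at h2
  have h3 : (-s).re < 0 := by simp [hs_re hs]
  have h4 : Real.exp (-s).re < 1 := by
    calc Real.exp (-s).re < Real.exp 0 := Real.exp_lt_exp.mpr h3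
    _ = 1 := Real.exp_zero
  linarith

lemma one_le_abs1 : 1 ≤ Complex.abs (s + 1) := by
  have h1 : (1:ℝ) ≤ (s + 1).re := by
    simp only [Complex.add_re, Complex.one_re]
    have : 0 < s.re := hs; linarith
  calc (1:ℝ) ≤ (s + 1).re := h1
  _ ≤ |(s + 1).re| := le_abs_self _
  _ ≤ Complex.abs (s + 1) := Complex.abs_re_le_abs _

lemma abs_le_abs1 : Complex.abs s ≤ Complex.abs (s + 1) := by
  have hre : 0 < s.re := hs
  rw [Complex.abs_apply, Complex.abs_apply]
  apply Real.sqrt_le_sqrt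
  simp only [Complex.normSq_apply, Complex.add_re, Complex.add_im, Complex.one_re,
    Complex.one_im]
  nlinarith

lemma E_abs_le_two : Complex.abs (Complex.exp (-s) - 1) ≤ 2 := by
  have h1 : Complex.abs (Complex.exp (-s)) ≤ 1 := by
    rw [Complex.abs_exp]
    have h3 : (-s).re ≤ 0 := by simp; linarith [hs_re hs]
    calc Real.exp (-s).re ≤ Real.exp 0 := Real.exp_le_exp.mpr h3
    _ = 1 := Real.exp_zero
  calc Complex.abs (Complex.exp (-s) - 1) ≤ Complex.abs (Complex.exp (-s)) + Complex.abs 1 :=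
        abs_sub_le'' _ _
  _ ≤ 1 + 1 := by simp [h1]
  _ = 2 := by norm_num

lemma E_abs_le_two_abs : Complex.abs (Complex.exp (-s) - 1) ≤ 2 * Complex.abs s := by
  rcases le_or_gt (Complex.abs s) 1 with h | h
  · have := Complex.abs_exp_sub_one_le (x := -s) (by simpa using h)
    simpa using this
  · calc Complex.abs (Complex.exp (-s) - 1) ≤ 2 := E_abs_le_two hs
    _ ≤ 2 * Complex.abs s := by nlinarith

lemma q_abs_le : Complex.abs (qA s) ≤ 20 * Complex.abs (s + 1) := by
  have h1 : (Pi ^ 2 - 3 : ℂ) = ((Real.pi ^ 2 - 3 : ℝ) : ℂ) := by push_cast; ring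
  have h2 : (3 * Pi ^ 2 - 1 : ℂ) = ((3 * Real.pi ^ 2 - 1 : ℝ) : ℂ) := by push_cast; ring
  have hπ := pi_sq_le
  have hπ3 : (3:ℝ) < Real.pi := Real.pi_gt_three
  have habs1 := one_le_abs1 hs
  have habs2 := abs_le_abs1 hs
  have hq : qA s = ((Real.pi ^ 2 - 3 : ℝ) : ℂ) * s / 2 + ((3 * Real.pi ^ 2 - 1 : ℝ) : ℂ) / 2 := by
    unfold qA; rw [← h1, ← h2]; ring
  rw [hq]
  calc Complex.abs (((Real.pi ^ 2 - 3 : ℝ) : ℂ) * s / 2 + ((3 * Real.pi ^ 2 - 1 : ℝ) : ℂ) / 2)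
      ≤ Complex.abs (((Real.pi ^ 2 - 3 : ℝ) : ℂ) * s / 2)
        + Complex.abs (((3 * Real.pi ^ 2 - 1 : ℝ) : ℂ) / 2) := Complex.abs.add_le _ _
  _ = |Real.pi ^ 2 - 3| * Complex.abs s / 2 + |3 * Real.pi ^ 2 - 1| / 2 := by
        rw [map_div₀, map_div₀, Complex.abs.map_mul, Complex.abs_ofReal, Complex.abs_ofReal,
          Complex.abs_two]
  _ = (Real.pi ^ 2 - 3) * Complex.abs s / 2 + (3 * Real.pi ^ 2 - 1) / 2 := by
        rw [_root_.abs_of_nonneg (by nlinarith : (0:ℝ) ≤ Real.pi ^ 2 - 3),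
          _root_.abs_of_nonneg (by nlinarith : (0:ℝ) ≤ 3 * Real.pi ^ 2 - 1)]
  _ ≤ 7 * Complex.abs (s + 1) / 2 + 29 * Complex.abs (s + 1) / 2 := by
        have h0 : (0:ℝ) ≤ Complex.abs s := Complex.abs.nonneg _
        have : (Real.pi ^ 2 - 3) * Complex.abs s ≤ 7 * Complex.abs (s + 1) := by nlinarith
        have : (3 * Real.pi ^ 2 - 1) ≤ 29 * Complex.abs (s + 1) := by nlinarith
        linarith
  _ ≤ 20 * Complex.abs (s + 1) := by linarith

lemma abs_sp_ge_of_near (h1 : Complex.abs (s - Pi * I) ≤ 1/2) :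
    1 ≤ Complex.abs (s + Pi * I) := by
  have key : (2 * Real.pi : ℝ) ≤ Complex.abs (s - Pi * I) + Complex.abs (s + Pi * I) := by
    have : ((2 * Real.pi : ℝ) : ℂ) * I = (s + Pi * I) - (s - Pi * I) := by push_cast; ring
    have h2 : Complex.abs (((2 * Real.pi : ℝ) : ℂ) * I) = 2 * Real.pi := by
      rw [Complex.abs.map_mul, Complex.abs_I, Complex.abs_ofReal, mul_one,
        abs_of_pos (by positivity)]
    calc (2 * Real.pi : ℝ) = Complex.abs (((2 * Real.pi : ℝ) : ℂ) * I) := h2.symm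
    _ = Complex.abs ((s + Pi * I) - (s - Pi * I)) := by rw [this]
    _ ≤ Complex.abs (s + Pi * I) + Complex.abs (s - Pi * I) := abs_sub_le'' _ _
    _ = Complex.abs (s - Pi * I) + Complex.abs (s + Pi * I) := by ring
  have hπ3 : (3:ℝ) < Real.pi := Real.pi_gt_three
  linarith

lemma abs_sm_ge_of_near (h1 : Complex.abs (s + Pi * I) ≤ 1/2) :
    1 ≤ Complex.abs (s - Pi * I) := by
  have key : (2 * Real.pi : ℝ) ≤ Complex.abs (s - Pi * I) + Complex.abs (s + Pi * I) := by
    have h3 : ((2 * Real.pi : ℝ) : ℂ) * I = (s + Pi * I) - (s - Pi * I) := by push_cast; ring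
    have h2 : Complex.abs (((2 * Real.pi : ℝ) : ℂ) * I) = 2 * Real.pi := by
      rw [Complex.abs.map_mul, Complex.abs_I, Complex.abs_ofReal, mul_one,
        abs_of_pos (by positivity)]
    calc (2 * Real.pi : ℝ) = Complex.abs (((2 * Real.pi : ℝ) : ℂ) * I) := h2.symm
    _ = Complex.abs ((s + Pi * I) - (s - Pi * I)) := by rw [h3]
    _ ≤ Complex.abs (s + Pi * I) + Complex.abs (s - Pi * I) := abs_sub_le'' _ _
    _ = Complex.abs (s - Pi * I) + Complex.abs (s + Pi * I) := by ring
  have hπ3 : (3:ℝ) < Real.pi := Real.pi_gt_three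
  linarith

end facts

lemma NA_near_p {s : ℂ} :
    NA s = (s + 3) * (s ^ 2 + Pi ^ 2) + qA s * (Complex.exp (-(s - Pi * I)) - 1) := by
  have he : Complex.exp (-s) = -Complex.exp (-(s - Pi * I)) := by
    have : (-s : ℂ) = -(s - Pi * I) + -(Pi * I) := by ring
    have hme : Complex.exp (-(Pi * I)) = -1 := by
      rw [Complex.exp_neg, Complex.exp_pi_mul_I]; norm_num
    rw [this, Complex.exp_add, hme]
    ring
  unfold NA qA
  rw [he]
  ring

lemma NA_near_m {s : ℂ} :
    NA s = (s + 3) * (s ^ 2 + Pi ^ 2) + qA s * (Complex.exp (-(s + Pi * I)) - 1) := by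
  have he : Complex.exp (-s) = -Complex.exp (-(s + Pi * I)) := by
    have : (-s : ℂ) = -(s + Pi * I) + (Pi * I) := by ring
    rw [this, Complex.exp_add, Complex.exp_pi_mul_I]
    ring
  unfold NA qA
  rw [he]
  ring

lemma NA_bound {s : ℂ} (hs : s ∈ RHP) :
    Complex.abs (NA s) ≤ 5000 * Complex.abs ((s + 1) * (s ^ 2 + Pi ^ 2)) := by
  have habs1 := one_le_abs1 hs
  have habs2 := abs_le_abs1 hs
  have hq := q_abs_le hs
  have h0 : (0:ℝ) ≤ Complex.abs (s + 1) := Complex.abs.nonneg _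
  have hfac : Complex.abs (s ^ 2 + Pi ^ 2)
      = Complex.abs (s - Pi * I) * Complex.abs (s + Pi * I) := by
    rw [sq_factor, map_mul]
  have hs3 : Complex.abs (s + 3) ≤ 3 * Complex.abs (s + 1) := by
    calc Complex.abs (s + 3) = Complex.abs ((s + 1) + 2) := by ring_nf
    _ ≤ Complex.abs (s + 1) + Complex.abs 2 := Complex.abs.add_le _ _
    _ ≤ Complex.abs (s + 1) + 2 * Complex.abs (s + 1) := by
          have : Complex.abs (2 : ℂ) = 2 := Complex.abs_two
          rw [this]; linarith
    _ = 3 * Complex.abs (s + 1) := by ring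
  rw [Complex.abs.map_mul, hfac]
  rcases le_or_gt (Complex.abs (s - Pi * I)) (1/2) with h1 | h1
  · -- near iπ
    have hsp : 1 ≤ Complex.abs (s + Pi * I) := abs_sp_ge_of_near hs h1
    have hexp : Complex.abs (Complex.exp (-(s - Pi * I)) - 1)
        ≤ 2 * Complex.abs (s - Pi * I) := by
      have := Complex.abs_exp_sub_one_le (x := -(s - Pi * I)) (by rw [Complex.abs.map_neg]; linarith)
      rwa [Complex.abs.map_neg] at this
    have hm0 : (0:ℝ) ≤ Complex.abs (s - Pi * I) := Complex.abs.nonneg _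
    calc Complex.abs (NA s)
        ≤ Complex.abs ((s + 3) * (s ^ 2 + Pi ^ 2))
          + Complex.abs (qA s) * Complex.abs (Complex.exp (-(s - Pi * I)) - 1) := by
          rw [NA_near_p]
          exact (Complex.abs.add_le _ _).trans (by rw [Complex.abs.map_mul (qA s)])
    _ ≤ 3 * Complex.abs (s + 1) * (Complex.abs (s - Pi * I) * Complex.abs (s + Pi * I))
          + 20 * Complex.abs (s + 1) * (2 * Complex.abs (s - Pi * I)) := by
          rw [Complex.abs.map_mul, hfac]
          have e1 : Complex.abs (s + 3) * (Complex.abs (s - Pi * I) * Complex.abs (s + Pi * I))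
              ≤ 3 * Complex.abs (s + 1) * (Complex.abs (s - Pi * I) * Complex.abs (s + Pi * I)) := by
            apply mul_le_mul_of_nonneg_right hs3 (by positivity)
          have e2 : Complex.abs (qA s) * Complex.abs (Complex.exp (-(s - Pi * I)) - 1)
              ≤ 20 * Complex.abs (s + 1) * (2 * Complex.abs (s - Pi * I)) := by
            apply mul_le_mul hq hexp (Complex.abs.nonneg _) (by positivity)
          linarith
    _ ≤ 5000 * (Complex.abs (s + 1) * (Complex.abs (s - Pi * I) * Complex.abs (s + Pi * I))) := by
          have key : Complex.abs (s + 1) * Complex.abs (s - Pi * I) * 1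
              ≤ Complex.abs (s + 1) * Complex.abs (s - Pi * I) * Complex.abs (s + Pi * I) :=
            mul_le_mul_of_nonneg_left hsp (mul_nonneg h0 hm0)
          nlinarith [mul_nonneg (mul_nonneg h0 hm0) (Complex.abs.nonneg (s + Pi * I))]
  · rcases le_or_gt (Complex.abs (s + Pi * I)) (1/2) with h2 | h2
    · -- near -iπ
      have hsm : 1 ≤ Complex.abs (s - Pi * I) := abs_sm_ge_of_near hs h2
      have hexp : Complex.abs (Complex.exp (-(s + Pi * I)) - 1)
          ≤ 2 * Complex.abs (s + Pi * I) := by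
        have := Complex.abs_exp_sub_one_le (x := -(s + Pi * I)) (by rw [Complex.abs.map_neg]; linarith)
        rwa [Complex.abs.map_neg] at this
      have hm0 : (0:ℝ) ≤ Complex.abs (s + Pi * I) := Complex.abs.nonneg _
      calc Complex.abs (NA s)
          ≤ Complex.abs ((s + 3) * (s ^ 2 + Pi ^ 2))
            + Complex.abs (qA s) * Complex.abs (Complex.exp (-(s + Pi * I)) - 1) := by
            rw [NA_near_m]
            exact (Complex.abs.add_le _ _).trans
              (by rw [Complex.abs.map_mul (qA s)])
      _ ≤ 3 * Complex.abs (s + 1) * (Complex.abs (s - Pi * I) * Complex.abs (s + Pi * I))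
            + 20 * Complex.abs (s + 1) * (2 * Complex.abs (s + Pi * I)) := by
            rw [Complex.abs.map_mul, hfac]
            have e1 : Complex.abs (s + 3) * (Complex.abs (s - Pi * I) * Complex.abs (s + Pi * I))
                ≤ 3 * Complex.abs (s + 1) * (Complex.abs (s - Pi * I) * Complex.abs (s + Pi * I)) := by
              apply mul_le_mul_of_nonneg_right hs3 (by positivity)
            have e2 : Complex.abs (qA s) * Complex.abs (Complex.exp (-(s + Pi * I)) - 1)
                ≤ 20 * Complex.abs (s + 1) * (2 * Complex.abs (s + Pi * I)) := by
              apply mul_le_mul hq hexp (Complex.abs.nonneg _) (by positivity)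
            linarith
      _ ≤ 5000 * (Complex.abs (s + 1) * (Complex.abs (s - Pi * I) * Complex.abs (s + Pi * I))) := by
            have key : Complex.abs (s + 1) * Complex.abs (s + Pi * I) * 1
                ≤ Complex.abs (s + 1) * Complex.abs (s + Pi * I) * Complex.abs (s - Pi * I) :=
              mul_le_mul_of_nonneg_left hsm (mul_nonneg h0 hm0)
            nlinarith [mul_nonneg (mul_nonneg h0 hm0) (Complex.abs.nonneg (s - Pi * I))]
    · -- away from ±iπ
      have hE := E_abs_le_two hs
      have hsm1 : Complex.abs (s + 1) ≤ 11 * Complex.abs (s - Pi * I) := by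
        have h5 : Complex.abs (1 + Pi * I) ≤ 5 := by
          calc Complex.abs (1 + Pi * I) ≤ Complex.abs 1 + Complex.abs (Pi * I) :=
                Complex.abs.add_le _ _
          _ = 1 + Real.pi := by
                rw [Complex.abs.map_mul, Complex.abs_I, Complex.abs_ofReal, mul_one, map_one,
                  abs_of_pos Real.pi_pos]
          _ ≤ 5 := by linarith [Real.pi_lt_d2]
        calc Complex.abs (s + 1) = Complex.abs ((s - Pi * I) + (1 + Pi * I)) := by ring_nf
        _ ≤ Complex.abs (s - Pi * I) + Complex.abs (1 + Pi * I) := Complex.abs.add_le _ _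
        _ ≤ Complex.abs (s - Pi * I) + 5 := by linarith
        _ ≤ 11 * Complex.abs (s - Pi * I) := by linarith
      have hsp1 : Complex.abs (s + 1) ≤ 11 * Complex.abs (s + Pi * I) := by
        have h5 : Complex.abs (1 - Pi * I) ≤ 5 := by
          calc Complex.abs (1 - Pi * I) ≤ Complex.abs 1 + Complex.abs (Pi * I) :=
                abs_sub_le'' _ _
          _ = 1 + Real.pi := by
                rw [Complex.abs.map_mul, Complex.abs_I, Complex.abs_ofReal, mul_one, map_one,
                  abs_of_pos Real.pi_pos]
          _ ≤ 5 := by linarith [Real.pi_lt_d2]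
        calc Complex.abs (s + 1) = Complex.abs ((s + Pi * I) + (1 - Pi * I)) := by ring_nf
        _ ≤ Complex.abs (s + Pi * I) + Complex.abs (1 - Pi * I) := Complex.abs.add_le _ _
        _ ≤ Complex.abs (s + Pi * I) + 5 := by linarith
        _ ≤ 11 * Complex.abs (s + Pi * I) := by linarith
      have hNA : Complex.abs (NA s) ≤ 41 * Complex.abs (s + 1) ^ 3 := by
        calc Complex.abs (NA s)
            ≤ Complex.abs ((s + 1) ^ 3) + Complex.abs (qA s) * Complex.abs (Complex.exp (-s) - 1) := by
              unfold NA
              exact (abs_sub_le'' _ _).trans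
                (by rw [Complex.abs.map_mul (qA s)])
        _ ≤ Complex.abs (s + 1) ^ 3 + 20 * Complex.abs (s + 1) * 2 := by
              rw [Complex.abs.map_pow]
              have := mul_le_mul hq hE (Complex.abs.nonneg _) (by positivity)
              linarith
        _ ≤ 41 * Complex.abs (s + 1) ^ 3 := by
              have hsq1 : 1 ≤ Complex.abs (s + 1) ^ 2 := by nlinarith
              have ha3 : Complex.abs (s + 1) ≤ Complex.abs (s + 1) ^ 3 := by nlinarith
              linarith
      have hsq : Complex.abs (s + 1) ^ 2 ≤ 121 * (Complex.abs (s - Pi * I) * Complex.abs (s + Pi * I)) := by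
        nlinarith [Complex.abs.nonneg (s - Pi * I), Complex.abs.nonneg (s + Pi * I)]
      calc Complex.abs (NA s) ≤ 41 * Complex.abs (s + 1) ^ 3 := hNA
      _ = 41 * Complex.abs (s + 1) * Complex.abs (s + 1) ^ 2 := by ring
      _ ≤ 41 * Complex.abs (s + 1) * (121 * (Complex.abs (s - Pi * I) * Complex.abs (s + Pi * I))) := by
            apply mul_le_mul_of_nonneg_left hsq (by positivity)
      _ ≤ 5000 * (Complex.abs (s + 1) * (Complex.abs (s - Pi * I) * Complex.abs (s + Pi * I))) := by
            nlinarith [mul_nonneg h0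
              (mul_nonneg (Complex.abs.nonneg (s - Pi * I)) (Complex.abs.nonneg (s + Pi * I)))]

lemma AA_mem : AA ∈ Hinf := by
  constructor
  · apply DifferentiableOn.div
    · apply Differentiable.differentiableOn
      unfold NA qA
      fun_prop
    · apply Differentiable.differentiableOn
      fun_prop
    · intro s hs
      exact mul_ne_zero (s1_ne hs) (sq_ne hs)
  · refine ⟨5000, fun s hs => ?_⟩
    have hden : (s + 1) * (s ^ 2 + Pi ^ 2) ≠ 0 := mul_ne_zero (s1_ne hs) (sq_ne hs)
    have hpos : 0 < Complex.abs ((s + 1) * (s ^ 2 + Pi ^ 2)) :=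
      Complex.abs.pos hden
    unfold AA
    rw [Complex.norm_eq_abs, map_div₀, div_le_iff₀ hpos]
    exact NA_bound hs

lemma BB_mem : BB ∈ Hinf := by
  constructor
  · apply DifferentiableOn.div
    · apply Differentiable.differentiableOn; unfold qA; fun_prop
    · apply Differentiable.differentiableOn; fun_prop
    · intro s hs; exact s1_ne hs
  · refine ⟨20, fun s hs => ?_⟩
    have hpos : 0 < Complex.abs (s + 1) := Complex.abs.pos (s1_ne hs)
    unfold BB
    rw [Complex.norm_eq_abs, map_div₀, div_le_iff₀ hpos]
    exact q_abs_le hs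

lemma phi_mem : (fun s => (Complex.exp (-s) - 1) / s) ∈ Hinf := by
  constructor
  · apply DifferentiableOn.div
    · apply Differentiable.differentiableOn; fun_prop
    · apply Differentiable.differentiableOn; fun_prop
    · intro s hs; exact s_ne hs
  · refine ⟨2, fun s hs => ?_⟩
    have hpos : 0 < Complex.abs s := Complex.abs.pos (s_ne hs)
    rw [Complex.norm_eq_abs, map_div₀, div_le_iff₀ hpos]
    exact E_abs_le_two_abs hs

lemma u_mem : (fun s => (s ^ 2 + Pi ^ 2) / ((s + 1) ^ 2)) ∈ Hinf := by
  constructor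
  · apply DifferentiableOn.div
    · apply Differentiable.differentiableOn; fun_prop
    · apply Differentiable.differentiableOn; fun_prop
    · intro s hs; exact pow_ne_zero _ (s1_ne hs)
  · refine ⟨11, fun s hs => ?_⟩
    have hpos : 0 < Complex.abs ((s + 1) ^ 2) := Complex.abs.pos (pow_ne_zero _ (s1_ne hs))
    rw [Complex.norm_eq_abs, map_div₀, div_le_iff₀ hpos]
    have habs1 := one_le_abs1 hs
    have habs2 := abs_le_abs1 hs
    have hπ := pi_sq_le
    have hππ : Complex.abs (Pi ^ 2) = Real.pi ^ 2 := by
      rw [← Complex.ofReal_pow, Complex.abs_ofReal, abs_of_pos (by positivity)]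
    calc Complex.abs (s ^ 2 + Pi ^ 2) ≤ Complex.abs (s ^ 2) + Complex.abs (Pi ^ 2) :=
          Complex.abs.add_le _ _
    _ = Complex.abs s ^ 2 + Real.pi ^ 2 := by rw [Complex.abs.map_pow, hππ]
    _ ≤ Complex.abs (s + 1) ^ 2 + 10 * Complex.abs (s + 1) ^ 2 := by
          have h0 : (0:ℝ) ≤ Complex.abs s := Complex.abs.nonneg _
          nlinarith
    _ = 11 * Complex.abs (s + 1) ^ 2 := by ring
    _ = 11 * Complex.abs ((s + 1) ^ 2) := by rw [Complex.abs.map_pow]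

lemma w_mem : (fun s => (Complex.exp (-s) - 1) * (s ^ 2 + s + Pi ^ 2) / (s * (s + 1) ^ 2)) ∈ Hinf := by
  constructor
  · apply DifferentiableOn.div
    · apply Differentiable.differentiableOn; fun_prop
    · apply Differentiable.differentiableOn; fun_prop
    · intro s hs; exact mul_ne_zero (s_ne hs) (pow_ne_zero _ (s1_ne hs))
  · refine ⟨24, fun s hs => ?_⟩
    have hpos : 0 < Complex.abs (s * (s + 1) ^ 2) :=
      Complex.abs.pos (mul_ne_zero (s_ne hs) (pow_ne_zero _ (s1_ne hs)))
    rw [Complex.norm_eq_abs, map_div₀, div_le_iff₀ hpos]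
    have habs1 := one_le_abs1 hs
    have habs2 := abs_le_abs1 hs
    have hπ := pi_sq_le
    have h0 : (0:ℝ) ≤ Complex.abs s := Complex.abs.nonneg _
    have hππ : Complex.abs (Pi ^ 2) = Real.pi ^ 2 := by
      rw [← Complex.ofReal_pow, Complex.abs_ofReal, abs_of_pos (by positivity)]
    have hden : Complex.abs (s * (s + 1) ^ 2) = Complex.abs s * Complex.abs (s + 1) ^ 2 := by
      rw [Complex.abs.map_mul, Complex.abs.map_pow]
    have hquad : Complex.abs (s ^ 2 + s + Pi ^ 2) ≤ Complex.abs s ^ 2 + Complex.abs s + 10 := by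
      calc Complex.abs (s ^ 2 + s + Pi ^ 2)
          ≤ Complex.abs (s ^ 2 + s) + Complex.abs (Pi ^ 2) := Complex.abs.add_le _ _
      _ ≤ Complex.abs (s ^ 2) + Complex.abs s + Real.pi ^ 2 := by
            rw [hππ]; linarith [Complex.abs.add_le (s ^ 2) s]
      _ ≤ Complex.abs s ^ 2 + Complex.abs s + 10 := by rw [Complex.abs.map_pow]; linarith
    rw [Complex.abs.map_mul, hden]
    rcases le_or_gt (Complex.abs s) 1 with h | h
    · have hE := E_abs_le_two_abs hs
      calc Complex.abs (Complex.exp (-s) - 1) * Complex.abs (s ^ 2 + s + Pi ^ 2)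
          ≤ (2 * Complex.abs s) * (Complex.abs s ^ 2 + Complex.abs s + 10) := by
            apply mul_le_mul hE hquad (Complex.abs.nonneg _) (by positivity)
      _ ≤ (2 * Complex.abs s) * 12 := by nlinarith
      _ = 24 * Complex.abs s := by ring
      _ ≤ 24 * (Complex.abs s * Complex.abs (s + 1) ^ 2) := by
            have hb2 : 1 ≤ Complex.abs (s + 1) ^ 2 := by nlinarith
            nlinarith [mul_le_mul_of_nonneg_left hb2 h0]
    · have hE := E_abs_le_two hs
      calc Complex.abs (Complex.exp (-s) - 1) * Complex.abs (s ^ 2 + s + Pi ^ 2)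
          ≤ 2 * (Complex.abs s ^ 2 + Complex.abs s + 10) := by
            apply mul_le_mul hE hquad (Complex.abs.nonneg _) (by norm_num)
      _ ≤ 24 * Complex.abs s ^ 2 := by nlinarith
      _ ≤ 24 * (Complex.abs s * Complex.abs (s + 1) ^ 2) := by
            have hb1 : Complex.abs (s + 1) ≤ Complex.abs (s + 1) ^ 2 := by nlinarith
            have e1 : Complex.abs s * Complex.abs s ≤ Complex.abs s * Complex.abs (s + 1) :=
              mul_le_mul_of_nonneg_left habs2 h0
            have e2 : Complex.abs s * Complex.abs (s + 1) ≤ Complex.abs s * Complex.abs (s + 1) ^ 2 :=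
              mul_le_mul_of_nonneg_left hb1 h0
            nlinarith
set_option maxHeartbeats 1000000 in
lemma gen1 {s : ℂ} (hs : s ∈ RHP) :
    (s ^ 2 + Pi ^ 2) / ((s + 1) ^ 2)
      * ((s + 1) ^ 2 / ((Complex.exp (-s) - 1) * (s ^ 2 + Pi ^ 2)))
    = 1 / (Complex.exp (-s) - 1) := by
  have h1 := s1_ne hs
  have h2 := sq_ne hs
  have h3 := E_ne hs
  field_simp

set_option maxHeartbeats 1000000 in
lemma gen2 {s : ℂ} (hs : s ∈ RHP) :
    (Complex.exp (-s) - 1) * (s ^ 2 + s + Pi ^ 2) / (s * (s + 1) ^ 2)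
      * ((s + 1) ^ 2 / ((Complex.exp (-s) - 1) * (s ^ 2 + Pi ^ 2)))
    = 1 / s + 1 / (s ^ 2 + Pi ^ 2) := by
  have h0 := s_ne hs
  have h1 := s1_ne hs
  have h2 := sq_ne hs
  have h3 := E_ne hs
  field_simp
  ring

set_option maxHeartbeats 1000000 in
lemma bezout {s : ℂ} (hs : s ∈ RHP) :
    (AA s - BB s * ((Complex.exp (-s) - 1) / s)) * (1 / (Complex.exp (-s) - 1))
      + BB s * (1 / s + 1 / (s ^ 2 + Pi ^ 2))
    = (s + 1) ^ 2 / ((Complex.exp (-s) - 1) * (s ^ 2 + Pi ^ 2)) := by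
  have h0 := s_ne hs
  have h1 := s1_ne hs
  have h2 := sq_ne hs
  have h3 := E_ne hs
  unfold AA BB
  obtain ⟨E, hE⟩ : ∃ E', Complex.exp (-s) - 1 = E' := ⟨_, rfl⟩
  obtain ⟨S, hS⟩ : ∃ S', s ^ 2 + Pi ^ 2 = S' := ⟨_, rfl⟩
  have key : NA s = (s + 1) ^ 3 - qA s * E := by rw [← hE]; rfl
  obtain ⟨q, hq⟩ : ∃ q', qA s = q' := ⟨_, rfl⟩
  rw [hq] at key
  rw [hE] at h3
  rw [hS] at h2
  rw [hE, hS, key, hq]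
  obtain ⟨u, hu⟩ : ∃ u', s + 1 = u' := ⟨_, rfl⟩
  rw [hu] at h1
  rw [hu]
  field_simp
  ring

end Stmt5Aux

/-- The fractional ideal of `H^∞` generated by `1/(e^{-s}-1)` and `1/s + 1/(s²+π²)`
coincides with the principal fractional ideal generated by
`(s+1)²/((e^{-s}-1)(s²+π²))`. -/
theorem stmt5 :
    {h : ℂ → ℂ | ∃ a ∈ Hinf, ∃ b ∈ Hinf, ∀ s ∈ RHP,
        h s = a s * (1 / (Complex.exp (-s) - 1)) +
          b s * (1 / s + 1 / (s ^ 2 + (Real.pi : ℂ) ^ 2))} =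
    {h : ℂ → ℂ | ∃ c ∈ Hinf, ∀ s ∈ RHP,
        h s = c s * ((s + 1) ^ 2 /
          ((Complex.exp (-s) - 1) * (s ^ 2 + (Real.pi : ℂ) ^ 2)))} := by
  ext h
  simp only [Set.mem_setOf_eq]
  constructor
  · rintro ⟨a, ha, b, hb, hab⟩
    refine ⟨fun s => a s * ((s ^ 2 + (Real.pi : ℂ) ^ 2) / ((s + 1) ^ 2))
      + b s * ((Complex.exp (-s) - 1) * (s ^ 2 + s + (Real.pi : ℂ) ^ 2) / (s * (s + 1) ^ 2)),
      Hinf_add (Hinf_mul ha u_mem) (Hinf_mul hb w_mem), fun s hs => ?_⟩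
    rw [hab s hs]
    rw [add_mul, mul_assoc, mul_assoc, gen1 hs, gen2 hs]
  · rintro ⟨c, hc, hcg⟩
    refine ⟨fun s => c s * (AA s - BB s * ((Complex.exp (-s) - 1) / s)),
      Hinf_mul hc (Hinf_sub AA_mem (Hinf_mul BB_mem phi_mem)),
      fun s => c s * BB s, Hinf_mul hc BB_mem, fun s hs => ?_⟩
    rw [hcg s hs, ← bezout hs]
    ring
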